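/- Let A ⊆ ℝ^d be roughly shift-invariant with constant L, N > 2L an integer, P_i = #(A ∩ Q(iN,N)), and p^x_{i,j} = #M^x_{i,j} − #M^x_{j,i} where M^x_{j,i} = Q(jN,N) ∩ σ_{Nx}^{−1}(A ∩ Q((i+x)N,N)). Then for all i, x ∈ ℤ^d: P_{i+x} = P_i − Σ_{j:‖i−j‖_∞=1} p^x_{i,j}. -/

import Mathlib

open Set

/-- The half-open cube `Q(b,r)` in `ℝ^d`. -/
def Qc {d : ℕ} (b : Fin d → ℝ) (r : ℝ) : Set (Fin d → ℝ) :=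
  {y | ∀ j, b j ≤ y j ∧ y j < b j + r}

/-- `A` is discrete: its intersection with any ball is finite. -/
def IsDiscreteSet {d : ℕ} (A : Set (Fin d → ℝ)) : Prop :=
  ∀ (x : Fin d → ℝ) (r : ℝ), (A ∩ Metric.ball x r).Finite

/-- `A` is roughly shift-invariant with constant `L` (sup norm). -/
def RSI {d : ℕ} (A : Set (Fin d → ℝ)) (L : ℝ) : Prop :=
  ∀ x : Fin d → ℝ, ∃ σ : A ≃ A, ∀ a : A, ‖(a : Fin d → ℝ) + x - (σ a : Fin d → ℝ)‖ < L

/-- Neighbors of `i ∈ ℤ^d` in the sup norm: all `j ≠ i` with `‖i-j‖_∞ = 1`. -/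
def nbrs {d : ℕ} (i : Fin d → ℤ) : Finset (Fin d → ℤ) :=
  (Fintype.piFinset (fun k => ({i k - 1, i k, i k + 1} : Finset ℤ))).erase i

/-- `M^x_{j,i}`: points of `A ∩ Q(jN,N)` sent by `σ = σ_{Nx}` into `A ∩ Q((i+x)N,N)`. -/
def Mset {d : ℕ} (A : Set (Fin d → ℝ)) (σ : A ≃ A) (N : ℕ) (x j i : Fin d → ℤ) :
    Set (Fin d → ℝ) :=
  {y | y ∈ Qc (fun k => (N : ℝ) * j k) N ∧
    ∃ h : y ∈ A, ((σ ⟨y, h⟩ : A) : Fin d → ℝ) ∈ Qc (fun k => (N : ℝ) * (i k + x k)) N}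

namespace Stmt13Aux

variable {d : ℕ}

lemma mem_cube_iff {N : ℝ} (hN : 0 < N) (j : Fin d → ℤ) (y : Fin d → ℝ) :
    y ∈ Qc (fun k => N * j k) N ↔ ∀ k, ⌊y k / N⌋ = j k := by
  simp only [Qc, mem_setOf_eq]
  refine forall_congr' fun k => ?_
  rw [Int.floor_eq_iff, le_div_iff₀ hN, div_lt_iff₀ hN]
  constructor <;> rintro ⟨h1, h2⟩ <;> constructor <;> nlinarith

lemma mem_cube_iff' {N : ℝ} (hN : 0 < N) (i x : Fin d → ℤ) (y : Fin d → ℝ) :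
    y ∈ Qc (fun k => N * (i k + x k)) N ↔ ∀ k, ⌊y k / N⌋ = i k + x k := by
  have := mem_cube_iff hN (fun k => i k + x k) y
  push_cast at this
  exact this

lemma cube_finite {A : Set (Fin d → ℝ)} (hdisc : IsDiscreteSet A) (b : Fin d → ℝ) (N : ℝ) :
    (A ∩ Qc b N).Finite := by
  apply (hdisc b (|N| + 1)).subset
  rintro y ⟨hyA, hyQ⟩
  refine ⟨hyA, ?_⟩
  rw [Metric.mem_ball, dist_pi_lt_iff (by positivity)]
  intro k
  have h1 := hyQ k
  rw [Real.dist_eq, abs_lt]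
  constructor <;> [skip; skip] <;>
    · have := le_abs_self N
      have := abs_nonneg N
      linarith [h1.1, h1.2]

lemma mset_finite {A : Set (Fin d → ℝ)} (hdisc : IsDiscreteSet A) (σ : A ≃ A) (N : ℕ)
    (x j i : Fin d → ℤ) : (Mset A σ N x j i).Finite := by
  apply (cube_finite hdisc (fun k => (N : ℝ) * j k) N).subset
  rintro y ⟨h1, h2, _⟩
  exact ⟨h2, h1⟩

lemma cube_disjoint {N : ℝ} (hN : 0 < N) {j j' : Fin d → ℤ} {y : Fin d → ℝ}
    (h : y ∈ Qc (fun k => N * j k) N) (h' : y ∈ Qc (fun k => N * j' k) N) : j = j' := by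
  funext k
  rw [mem_cube_iff hN] at h h'
  rw [← h k, ← h' k]

end Stmt13Aux

open Stmt13Aux in
theorem stmt13 {d : ℕ} (A : Set (Fin d → ℝ)) (L : ℝ) (N : ℕ) (hN : (N : ℝ) > 2 * L)
    (hdisc : IsDiscreteSet A) (hA : RSI A L)
    (x : Fin d → ℤ) (σ : A ≃ A)
    (hσ : ∀ a : A, ‖(a : Fin d → ℝ) + (fun k => (N : ℝ) * x k) - (σ a : Fin d → ℝ)‖ < L) :
    ∀ i : Fin d → ℤ,
      ((A ∩ Qc (fun k => (N : ℝ) * (i k + x k)) N).ncard : ℤ)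
        = ((A ∩ Qc (fun k => (N : ℝ) * i k) N).ncard : ℤ)
          - ∑ j ∈ nbrs i, (((Mset A σ N x i j).ncard : ℤ) - ((Mset A σ N x j i).ncard : ℤ)) := by
  intro i
  classical
  rcases A.eq_empty_or_nonempty with hAe | hAne
  · have hM : ∀ j j', Mset A σ N x j j' = ∅ := by
      intro j j'
      ext y
      simp only [Mset, mem_setOf_eq, hAe, mem_empty_iff_false, false_and, exists_false,
        and_false, iff_false]
      tauto
    simp [hAe, hM]
  · -- A nonempty, hence L > 0 and N > 0
    obtain ⟨a0, ha0⟩ := hAne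
    have hL0 : 0 < L := lt_of_le_of_lt (norm_nonneg _) (hσ ⟨a0, ha0⟩)
    have hN0 : (0 : ℝ) < N := by linarith
    -- coordinatewise bound for the shift error
    have herr : ∀ (a : A) (k : Fin d),
        |(a : Fin d → ℝ) k + (N : ℝ) * x k - (σ a : Fin d → ℝ) k| < L := by
      intro a k
      have h := hσ a
      have h2 := norm_le_pi_norm ((a : Fin d → ℝ) + (fun k => (N : ℝ) * x k)
        - (σ a : Fin d → ℝ)) k
      rw [Real.norm_eq_abs] at h2
      simp only [Pi.add_apply, Pi.sub_apply] at h2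
      linarith
    set F : Finset (Fin d → ℤ) :=
      Fintype.piFinset (fun k => ({i k - 1, i k, i k + 1} : Finset ℤ)) with hF
    have hiF : i ∈ F := by
      simp [hF, Fintype.mem_piFinset]
    have hFe : F = insert i (nbrs i) := by
      rw [nbrs, Finset.insert_erase hiF]
    have hinb : i ∉ nbrs i := Finset.notMem_erase _ _
    -- location lemma 1 : a ∈ Q(iN), then floor(σa/N) - x ∈ F
    have key1 : ∀ (y : Fin d → ℝ) (hy : y ∈ A),
        y ∈ Qc (fun k => (N : ℝ) * i k) N →
        (fun k => ⌊((σ ⟨y, hy⟩ : A) : Fin d → ℝ) k / N⌋ - x k) ∈ F := by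
      intro y hy hQ
      rw [mem_cube_iff hN0] at hQ
      rw [hF, Fintype.mem_piFinset]
      intro k
      have h1 := hQ k
      have h2 := herr ⟨y, hy⟩ k
      rw [abs_lt] at h2
      have hy1 : (i k : ℝ) ≤ y k / N := by
        rw [← h1]; exact Int.floor_le _
      have hy2 : y k / N < i k + 1 := by
        rw [← h1]; exact Int.lt_floor_add_one _
      have hy1' : (N : ℝ) * i k ≤ y k := by
        rw [le_div_iff₀ hN0] at hy1; nlinarith
      have hy2' : y k < (N : ℝ) * i k + N := by
        rw [div_lt_iff₀ hN0] at hy2; nlinarith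
      set s := ((σ ⟨y, hy⟩ : A) : Fin d → ℝ) k with hs
      have hlow : (N : ℝ) * (i k + x k - 1) < s := by push_cast; nlinarith
      have hhigh : s < (N : ℝ) * (i k + x k + 2) := by push_cast; nlinarith
      have hfl : (i k + x k - 1 : ℤ) ≤ ⌊s / N⌋ := by
        apply Int.le_floor.2
        rw [le_div_iff₀ hN0]
        push_cast
        nlinarith
      have hfh : ⌊s / N⌋ < (i k + x k + 2 : ℤ) := by
        apply Int.floor_lt.2
        rw [div_lt_iff₀ hN0]
        push_cast
        nlinarith
      simp only [Finset.mem_insert, Finset.mem_singleton]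
      omega
    -- location lemma 2 : σa ∈ Q((i+x)N), then floor(a/N) ∈ F
    have key2 : ∀ (y : Fin d → ℝ) (hy : y ∈ A),
        ((σ ⟨y, hy⟩ : A) : Fin d → ℝ) ∈ Qc (fun k => (N : ℝ) * (i k + x k)) N →
        (fun k => ⌊y k / N⌋) ∈ F := by
      intro y hy hQ
      rw [mem_cube_iff' hN0] at hQ
      rw [hF, Fintype.mem_piFinset]
      intro k
      have h1 := hQ k
      have h2 := herr ⟨y, hy⟩ k
      rw [abs_lt] at h2
      set s := ((σ ⟨y, hy⟩ : A) : Fin d → ℝ) k with hs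
      have hy1 : ((i k + x k : ℤ) : ℝ) ≤ s / N := by
        rw [← h1]; exact Int.floor_le _
      have hy2 : s / N < (i k + x k : ℤ) + 1 := by
        rw [← h1]; exact Int.lt_floor_add_one _
      rw [le_div_iff₀ hN0] at hy1
      rw [div_lt_iff₀ hN0] at hy2
      push_cast at hy1 hy2
      have hlow : (N : ℝ) * (i k - 1) < y k := by push_cast; nlinarith
      have hhigh : y k < (N : ℝ) * (i k + 2) := by push_cast; nlinarith
      have hfl : (i k - 1 : ℤ) ≤ ⌊y k / N⌋ := by
        apply Int.le_floor.2
        rw [le_div_iff₀ hN0]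
        push_cast
        nlinarith
      have hfh : ⌊y k / N⌋ < (i k + 2 : ℤ) := by
        apply Int.floor_lt.2
        rw [div_lt_iff₀ hN0]
        push_cast
        nlinarith
      simp only [Finset.mem_insert, Finset.mem_singleton]
      omega
    -- partition of A ∩ Q(iN,N)
    have hP : A ∩ Qc (fun k => (N : ℝ) * i k) N = ⋃ j ∈ F, Mset A σ N x i j := by
      ext y
      simp only [mem_inter_iff, mem_iUnion, exists_prop]
      constructor
      · rintro ⟨hyA, hyQ⟩
        refine ⟨fun k => ⌊((σ ⟨y, hyA⟩ : A) : Fin d → ℝ) k / N⌋ - x k, key1 y hyA hyQ, hyQ,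
          hyA, ?_⟩
        rw [mem_cube_iff' hN0]
        intro k
        omega
      · rintro ⟨j, _, hyQ, hyA, _⟩
        exact ⟨hyA, hyQ⟩
    -- partition of preimage of A ∩ Q((i+x)N,N)
    have hT : {y | ∃ h : y ∈ A, ((σ ⟨y, h⟩ : A) : Fin d → ℝ)
          ∈ Qc (fun k => (N : ℝ) * (i k + x k)) N}
        = ⋃ j ∈ F, Mset A σ N x j i := by
      ext y
      simp only [mem_setOf_eq, mem_iUnion, exists_prop, Mset]
      constructor
      · rintro ⟨hyA, hyQ⟩
        refine ⟨fun k => ⌊y k / N⌋, key2 y hyA hyQ, ?_, hyA, hyQ⟩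
        rw [mem_cube_iff hN0]
        intro k
        rfl
      · rintro ⟨j, _, _, hyA, hyQ⟩
        exact ⟨hyA, hyQ⟩
    -- finset versions
    have finM : ∀ j j', (Mset A σ N x j j').Finite := fun j j' => mset_finite hdisc σ N x j j'
    -- disjointness of the source cubes
    have hdisj1 : ∀ j ∈ F, ∀ j' ∈ F, j ≠ j' →
        Disjoint ((finM i j).toFinset) ((finM i j').toFinset) := by
      intro j _ j' _ hne
      rw [Finset.disjoint_left]
      intro y hy hy'
      rw [Set.Finite.mem_toFinset] at hy hy'
      obtain ⟨_, hA1, hQ1⟩ := hy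
      obtain ⟨_, hA2, hQ2⟩ := hy'
      apply hne
      funext k
      rw [mem_cube_iff' hN0] at hQ1 hQ2
      have h1 := hQ1 k
      have h2 := hQ2 k
      omega
    have hdisj2 : ∀ j ∈ F, ∀ j' ∈ F, j ≠ j' →
        Disjoint ((finM j i).toFinset) ((finM j' i).toFinset) := by
      intro j _ j' _ hne
      rw [Finset.disjoint_left]
      intro y hy hy'
      rw [Set.Finite.mem_toFinset] at hy hy'
      apply hne (cube_disjoint hN0 hy.1 hy'.1)
    -- count 1 : P_i
    have c1 : (A ∩ Qc (fun k => (N : ℝ) * i k) N).ncard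
        = ∑ j ∈ F, (Mset A σ N x i j).ncard := by
      rw [hP]
      have he : (⋃ j ∈ F, Mset A σ N x i j)
          = ((F.biUnion fun j => (finM i j).toFinset : Finset _) : Set _) := by
        ext y
        simp [Set.Finite.mem_toFinset]
      rw [he, Set.ncard_coe_finset, Finset.card_biUnion hdisj1]
      exact Finset.sum_congr rfl fun j _ => (Set.ncard_eq_toFinset_card _ (finM i j)).symm
    -- count 2 : P_{i+x} via the bijection σ
    have c2 : (A ∩ Qc (fun k => (N : ℝ) * (i k + x k)) N).ncard
        = ∑ j ∈ F, (Mset A σ N x j i).ncard := by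
      set T : Set (Fin d → ℝ) := {y | ∃ h : y ∈ A, ((σ ⟨y, h⟩ : A) : Fin d → ℝ)
          ∈ Qc (fun k => (N : ℝ) * (i k + x k)) N} with hTdef
      set g : (Fin d → ℝ) → (Fin d → ℝ) :=
        fun y => if h : y ∈ A then ((σ ⟨y, h⟩ : A) : Fin d → ℝ) else y with hg
      have hgval : ∀ (y : Fin d → ℝ) (h : y ∈ A), g y = ((σ ⟨y, h⟩ : A) : Fin d → ℝ) :=
        fun y h => dif_pos h
      have hbij : Set.BijOn g T (A ∩ Qc (fun k => (N : ℝ) * (i k + x k)) N) := by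
        refine ⟨?_, ?_, ?_⟩
        · rintro y ⟨h, hQ⟩
          rw [hgval y h]
          exact ⟨(σ ⟨y, h⟩).2, hQ⟩
        · rintro y ⟨h, _⟩ y' ⟨h', _⟩ heq
          rw [hgval y h, hgval y' h'] at heq
          have := σ.injective (Subtype.coe_injective heq)
          exact congrArg Subtype.val this
        · rintro b ⟨hbA, hbQ⟩
          refine ⟨((σ.symm ⟨b, hbA⟩ : A) : Fin d → ℝ), ?_, ?_⟩
          · refine ⟨(σ.symm ⟨b, hbA⟩).2, ?_⟩
            have : σ ⟨((σ.symm ⟨b, hbA⟩ : A) : Fin d → ℝ), (σ.symm ⟨b, hbA⟩).2⟩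
                = (⟨b, hbA⟩ : A) := by
              rw [show (⟨((σ.symm ⟨b, hbA⟩ : A) : Fin d → ℝ), (σ.symm ⟨b, hbA⟩).2⟩ : A)
                = σ.symm ⟨b, hbA⟩ from rfl]
              exact σ.apply_symm_apply _
            rw [this]
            exact hbQ
          · rw [hgval _ (σ.symm ⟨b, hbA⟩).2]
            rw [show (⟨((σ.symm ⟨b, hbA⟩ : A) : Fin d → ℝ), (σ.symm ⟨b, hbA⟩).2⟩ : A)
              = σ.symm ⟨b, hbA⟩ from rfl]
            rw [σ.apply_symm_apply]
      have hcard : (A ∩ Qc (fun k => (N : ℝ) * (i k + x k)) N).ncard = T.ncard := by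
        rw [← hbij.image_eq, Set.ncard_image_of_injOn hbij.injOn]
      rw [hcard, hT]
      have he : (⋃ j ∈ F, Mset A σ N x j i)
          = ((F.biUnion fun j => (finM j i).toFinset : Finset _) : Set _) := by
        ext y
        simp [Set.Finite.mem_toFinset]
      rw [he, Set.ncard_coe_finset, Finset.card_biUnion hdisj2]
      exact Finset.sum_congr rfl fun j _ => (Set.ncard_eq_toFinset_card _ (finM j i)).symm
    rw [c1, c2]
    push_cast
    rw [hFe, Finset.sum_insert hinb, Finset.sum_insert hinb, Finset.sum_sub_distrib]
    ring
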